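/- Let θ, ρ : [t̄, T_F) → ℝ be continuously differentiable functions, c > 0 and γ ≥ 1 constants such that θ'(s) ≥ c·|ρ'(s)|^γ for all s ∈ [t̄, T_F), and suppose ρ(t) → +∞ as t → T_F⁻. Then θ(t) → +∞ as t → T_F⁻. -/
import Mathlib


open Set Filter

/-- If `θ' ≥ c|ρ'|^γ` with `γ ≥ 1` and `ρ` blows up at `T_F⁻`, then `θ` blows up too. -/
theorem stmt_3
    (tbar TF : ℝ) (h : tbar < TF)
    (θ θ' ρ ρ' : ℝ → ℝ)
    (hθderiv : ∀ t ∈ Ico tbar TF, HasDerivAt θ (θ' t) t)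
    (hθcont : ContinuousOn θ' (Ico tbar TF))
    (hρderiv : ∀ t ∈ Ico tbar TF, HasDerivAt ρ (ρ' t) t)
    (hρcont : ContinuousOn ρ' (Ico tbar TF))
    (c γ : ℝ) (hc : 0 < c) (hγ : 1 ≤ γ)
    (hineq : ∀ s ∈ Ico tbar TF, c * |ρ' s| ^ γ ≤ θ' s)
    (hblow : Tendsto ρ (nhdsWithin TF (Iio TF)) atTop) :
    Tendsto θ (nhdsWithin TF (Iio TF)) atTop := by
  have key : ∀ t ∈ Ico tbar TF,
      θ tbar + c * (ρ t - ρ tbar) - c * (TF - tbar) ≤ θ t := by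
    intro t ht
    obtain ⟨ht1, ht2⟩ := ht
    have hsub : Icc tbar t ⊆ Ico tbar TF := fun x hx => ⟨hx.1, lt_of_le_of_lt hx.2 ht2⟩
    have huIcc : uIcc tbar t = Icc tbar t := uIcc_of_le ht1
    have hθint : IntervalIntegrable θ' MeasureTheory.volume tbar t := by
      apply ContinuousOn.intervalIntegrable
      rw [huIcc]; exact hθcont.mono hsub
    have hρint : IntervalIntegrable ρ' MeasureTheory.volume tbar t := by
      apply ContinuousOn.intervalIntegrable
      rw [huIcc]; exact hρcont.mono hsub
    have hgint : IntervalIntegrable (fun s => 1 + θ' s / c) MeasureTheory.volume tbar t := by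
      apply ContinuousOn.intervalIntegrable
      rw [huIcc]
      exact continuousOn_const.add ((hθcont.mono hsub).div_const c)
    have hθftc : ∫ s in tbar..t, θ' s = θ t - θ tbar := by
      apply intervalIntegral.integral_eq_sub_of_hasDerivAt
      · intro x hx
        exact hθderiv x (hsub (huIcc ▸ hx))
      · exact hθint
    have hρftc : ∫ s in tbar..t, ρ' s = ρ t - ρ tbar := by
      apply intervalIntegral.integral_eq_sub_of_hasDerivAt
      · intro x hx
        exact hρderiv x (hsub (huIcc ▸ hx))
      · exact hρint
    have hmono : ∫ s in tbar..t, ρ' s ≤ ∫ s in tbar..t, (1 + θ' s / c) := by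
      apply intervalIntegral.integral_mono_on ht1 hρint hgint
      intro x hx
      have hxm : x ∈ Ico tbar TF := hsub hx
      have habs : |ρ' x| ≤ 1 + |ρ' x| ^ γ := by
        rcases le_or_gt (|ρ' x|) 1 with h1 | h1
        · have : (0:ℝ) ≤ |ρ' x| ^ γ := Real.rpow_nonneg (abs_nonneg _) _
          linarith
        · have : |ρ' x| ^ (1:ℝ) ≤ |ρ' x| ^ γ :=
            Real.rpow_le_rpow_of_exponent_le h1.le hγ
          rw [Real.rpow_one] at this
          linarith
      have h2 : c * |ρ' x| ^ γ ≤ θ' x := hineq x hxm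
      have h3 : |ρ' x| ^ γ ≤ θ' x / c := (le_div_iff₀ hc).mpr (by linarith [mul_comm c (|ρ' x| ^ γ)])
      calc ρ' x ≤ |ρ' x| := le_abs_self _
        _ ≤ 1 + |ρ' x| ^ γ := habs
        _ ≤ 1 + θ' x / c := by linarith
    have hg : ∫ s in tbar..t, (1 + θ' s / c) = (t - tbar) + (θ t - θ tbar) / c := by
      rw [intervalIntegral.integral_add (intervalIntegrable_const) (hθint.div_const c),
        intervalIntegral.integral_const, intervalIntegral.integral_div, hθftc]
      simp
    rw [hρftc, hg] at hmono
    have httb : t - tbar ≤ TF - tbar := by linarith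
    have h4 : (ρ t - ρ tbar) - (TF - tbar) ≤ (θ t - θ tbar) / c := by linarith
    have h5 : ((ρ t - ρ tbar) - (TF - tbar)) * c ≤ θ t - θ tbar := (le_div_iff₀ hc).mp h4
    nlinarith
  have hIoo : Ioo tbar TF ∈ nhdsWithin TF (Iio TF) := by
    apply mem_nhdsWithin.mpr
    exact ⟨Ioi tbar, isOpen_Ioi, h, fun x hx => ⟨hx.1, hx.2⟩⟩
  have hlower : Tendsto (fun t => θ tbar + c * (ρ t - ρ tbar) - c * (TF - tbar))
      (nhdsWithin TF (Iio TF)) atTop := by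
    apply tendsto_atTop_add_const_right
    apply tendsto_atTop_add_const_left
    exact (tendsto_atTop_add_const_right _ _ hblow).const_mul_atTop hc
  apply tendsto_atTop_mono' _ _ hlower
  filter_upwards [hIoo] with t ht
  exact key t ⟨ht.1.le, ht.2⟩
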